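/- An arrangement of n hyperplanes through the origin in R^m (n ≥ m ≥ 1, hyperplanes in general position) partitions R^m minus their union into at most 2·sum_{j=0}^{m-1} C(n-1, j) regions. -/

import Mathlib

open Matrix Finset


section
variable {V : Type} [AddCommGroup V] [Module ℝ V]

/-- Achievability of a sign vector for a family of linear functionals. -/
def AchSign {n : ℕ} (φ : Fin n → (V →ₗ[ℝ] ℝ)) (σ : Fin n → Bool) : Prop :=
  ∃ x : V, ∀ i, φ i x ≠ 0 ∧ (σ i = true ↔ 0 < φ i x)

/-- Flattened general-position hypothesis. -/
def GPos {n : ℕ} (φ : Fin n → (V →ₗ[ℝ] ℝ)) (m : ℕ) : Prop :=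
  ∀ (t : Finset (Fin n)) (c : Fin n → ℝ), t.card ≤ m →
    ∑ i ∈ t, c i • φ i = 0 → ∀ i ∈ t, c i = 0

lemma funct_multiple (g h : V →ₗ[ℝ] ℝ) (v : V) (hv : g v = 1)
    (hker : ∀ x : V, g x = 0 → h x = 0) : h = h v • g := by
  ext x
  have hx : g (x - g x • v) = 0 := by simp [hv]
  have := hker _ hx
  simp only [map_sub, _root_.map_smul, smul_eq_mul, sub_eq_zero] at this
  simp [this, mul_comm]

lemma cross_lemma {n : ℕ}
    (g : V →ₗ[ℝ] ℝ) (φ : Fin n → (V →ₗ[ℝ] ℝ)) (τ : Fin n → Bool) (x₁ x₂ : V)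
    (h1 : ∀ i, φ i x₁ ≠ 0 ∧ (τ i = true ↔ 0 < φ i x₁))
    (h2 : ∀ i, φ i x₂ ≠ 0 ∧ (τ i = true ↔ 0 < φ i x₂))
    (hp : 0 < g x₁) (hq : g x₂ < 0) :
    ∃ y : V, g y = 0 ∧ ∀ i, φ i y ≠ 0 ∧ (τ i = true ↔ 0 < φ i y) := by
  set p := g x₁ with hpdef
  set q := g x₂ with hqdef
  set t : ℝ := p / (p - q) with htdef
  have hpq : 0 < p - q := by linarith
  have ht0 : 0 < t := div_pos hp hpq
  have ht1 : t < 1 := by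
    rw [div_lt_one hpq]; linarith
  refine ⟨(1 - t) • x₁ + t • x₂, ?_, ?_⟩
  · have : (1 - t) * p + t * q = 0 := by
      field_simp [htdef]
      have hm : t * (p - q) = p := by rw [htdef]; exact div_mul_cancel₀ p hpq.ne'
      linear_combination -hm
    simpa [_root_.map_smul, smul_eq_mul] using this
  · intro i
    have hval : φ i ((1 - t) • x₁ + t • x₂) = (1 - t) * φ i x₁ + t * φ i x₂ := by
      simp [_root_.map_smul, smul_eq_mul]
    rw [hval]
    cases hτ : τ i with
    | true =>
        have hx1 : 0 < φ i x₁ := (h1 i).2.mp hτ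
        have hx2 : 0 < φ i x₂ := (h2 i).2.mp hτ
        have : 0 < (1 - t) * φ i x₁ + t * φ i x₂ := by nlinarith
        exact ⟨this.ne', by simpa using this⟩
    | false =>
        have hx1 : φ i x₁ < 0 := by
          rcases lt_or_gt_of_ne (h1 i).1 with h | h
          · exact h
          · exact absurd ((h1 i).2.mpr h) (by simp [hτ])
        have hx2 : φ i x₂ < 0 := by
          rcases lt_or_gt_of_ne (h2 i).1 with h | h
          · exact h
          · exact absurd ((h2 i).2.mpr h) (by simp [hτ])
        have : (1 - t) * φ i x₁ + t * φ i x₂ < 0 := by nlinarith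
        exact ⟨this.ne, by simp [hτ, not_lt.mpr this.le]⟩

end

lemma pascal_sum (k m : ℕ) :
    ∑ j ∈ range (m + 1), (k + 1).choose j
      = (∑ j ∈ range m, k.choose j) + ∑ j ∈ range (m + 1), k.choose j := by
  induction m with
  | zero => simp
  | succ m ih =>
      rw [sum_range_succ, ih, Nat.choose_succ_succ,
        sum_range_succ (n := m + 1) (f := fun j => k.choose j),
        sum_range_succ (n := m) (f := fun j => k.choose j)]
      ring

lemma aux_count (n : ℕ) :
    ∀ (m : ℕ) (V : Type) [AddCommGroup V] [Module ℝ V] [FiniteDimensional ℝ V],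
    Module.finrank ℝ V = m → m ≤ n → 1 ≤ n →
    ∀ φ : Fin n → (V →ₗ[ℝ] ℝ), GPos φ m →
    Nat.card {σ : Fin n → Bool // AchSign φ σ} ≤ 2 * ∑ j ∈ range m, (n - 1).choose j := by
  induction n with
  | zero => intro m V _ _ _ _ _ h1; omega
  | succ n' ih =>
    intro m V _ _ _ hrank hmn _ φ hgp
    classical
    rcases Nat.eq_zero_or_pos m with hm0 | hm1
    · -- m = 0 : V is trivial, no achievable sign vectors
      subst hm0
      have hsub : Subsingleton V := Module.finrank_zero_iff.mp hrank
      have hempty : IsEmpty {σ : Fin (n'+1) → Bool // AchSign φ σ} := by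
        constructor
        rintro ⟨σ, x, hx⟩
        have hx0 : x = 0 := Subsingleton.elim x 0
        exact (hx 0).1 (by simp [hx0])
      simp [Nat.card_of_isEmpty]
    rcases eq_or_lt_of_le hmn with heq | hlt
    · -- base case n = m : trivial bound 2^n
      have h1 : Nat.card {σ : Fin (n'+1) → Bool // AchSign φ σ}
          ≤ Nat.card (Fin (n'+1) → Bool) :=
        Nat.card_le_card_of_injective _ Subtype.val_injective
      have h2 : Nat.card (Fin (n'+1) → Bool) = 2 ^ (n'+1) := by
        simp [Nat.card_eq_fintype_card]
      have h3 : ∑ j ∈ range m, (n' + 1 - 1).choose j = 2 ^ n' := by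
        subst heq
        simpa using Nat.sum_range_choose n'
      rw [h3]
      rw [h2] at h1
      calc Nat.card {σ : Fin (n'+1) → Bool // AchSign φ σ} ≤ 2 ^ (n'+1) := h1
        _ = 2 * 2 ^ n' := by ring
    -- main step : 1 ≤ m ≤ n'
    have hmn' : m ≤ n' := by omega
    set L := Fin.last n' with hL
    have hφL : φ L ≠ 0 := by
      intro h0
      have := hgp {L} (fun _ => 1) (by rw [Finset.card_singleton]; omega) (by simp [h0]) L (by simp)
      exact one_ne_zero this
    obtain ⟨w, hw⟩ : ∃ w, φ L w ≠ 0 := by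
      by_contra hc
      push_neg at hc
      exact hφL (by ext x; simpa using hc x)
    set v : V := (φ L w)⁻¹ • w with hv
    have hv1 : φ L v = 1 := by
      simp [hv, _root_.map_smul, smul_eq_mul, inv_mul_cancel₀ hw]
    set K := LinearMap.ker (φ L) with hK
    have hrankK : Module.finrank ℝ K = m - 1 := by
      have h2 := Module.Dual.finrank_ker_add_one_of_ne_zero hφL
      rw [hrank] at h2
      rw [hK]
      omega
    set φ' : Fin n' → (V →ₗ[ℝ] ℝ) := fun i => φ i.castSucc with hφ'
    set ψ : Fin n' → (K →ₗ[ℝ] ℝ) := fun i => (φ' i).domRestrict K with hψ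
    have hgp' : GPos φ' m := by
      intro t' c' hcard hsum i hi
      set c : Fin (n' + 1) → ℝ := fun j =>
        if h : j = L then 0 else c' (j.castPred (by simpa [hL] using h)) with hc
      have hne : ∀ i : Fin n', i.castSucc ≠ L := fun i => (Fin.castSucc_lt_last i).ne
      have hcval : ∀ i : Fin n', c i.castSucc = c' i := by
        intro i; simp [hc, hne i]
      have hsum2 : ∑ j ∈ t'.map Fin.castSuccEmb, c j • φ j = 0 := by
        rw [Finset.sum_map]
        have : ∀ i ∈ t', c (Fin.castSuccEmb i) • φ (Fin.castSuccEmb i) = c' i • φ' i := by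
          intro i _
          show c i.castSucc • φ i.castSucc = c' i • φ' i
          rw [hcval i]
        rw [Finset.sum_congr rfl this, hsum]
      have := hgp (t'.map Fin.castSuccEmb) c (by simpa using hcard) hsum2 i.castSucc
        (Finset.mem_map_of_mem _ hi)
      rwa [hcval i] at this
    have hgpψ : GPos ψ (m - 1) := by
      intro t' c' hcard hsum i hi
      set h : V →ₗ[ℝ] ℝ := ∑ i ∈ t', c' i • φ' i with hh
      have hker : ∀ x : V, φ L x = 0 → h x = 0 := by
        intro x hx
        have hxK : x ∈ K := by simpa [hK, LinearMap.mem_ker] using hx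
        have := congrArg (fun f : (K →ₗ[ℝ] ℝ) => f ⟨x, hxK⟩) hsum
        simpa [hh, hψ, LinearMap.sum_apply, LinearMap.smul_apply,
          LinearMap.domRestrict_apply, smul_eq_mul] using this
      have hmul : h = h v • φ L := funct_multiple (φ L) h v hv1 hker
      set c : Fin (n' + 1) → ℝ := fun j =>
        if hj : j = L then -(h v) else c' (j.castPred (by simpa [hL] using hj)) with hc
      have hne : ∀ i : Fin n', i.castSucc ≠ L := fun i => (Fin.castSucc_lt_last i).ne
      have hcval : ∀ i : Fin n', c i.castSucc = c' i := by
        intro i; simp [hc, hne i]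
      have hLnot : L ∉ t'.map Fin.castSuccEmb := by
        simp only [Finset.mem_map]
        rintro ⟨j, -, hj⟩
        exact hne j hj
      have hsum2 : ∑ j ∈ insert L (t'.map Fin.castSuccEmb), c j • φ j = 0 := by
        rw [Finset.sum_insert hLnot, Finset.sum_map]
        have heq : ∀ i ∈ t', c (Fin.castSuccEmb i) • φ (Fin.castSuccEmb i) = c' i • φ' i := by
          intro i _
          show c i.castSucc • φ i.castSucc = c' i • φ' i
          rw [hcval i]
        rw [Finset.sum_congr rfl heq, ← hh]
        have hcL : c L = -(h v) := by simp [hc]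
        rw [hcL]
        ext x
        have := congrArg (fun f : V →ₗ[ℝ] ℝ => f x) hmul
        simp only [LinearMap.add_apply, LinearMap.smul_apply, LinearMap.zero_apply,
          smul_eq_mul] at this ⊢
        linarith
      have hcard2 : (insert L (t'.map Fin.castSuccEmb)).card ≤ m := by
        rw [Finset.card_insert_of_notMem hLnot, Finset.card_map]
        omega
      have := hgp _ c hcard2 hsum2 i.castSucc
        (Finset.mem_insert_of_mem (Finset.mem_map_of_mem _ hi))
      rwa [hcval i] at this
    -- restriction of an achievable sign vector is achievable
    have hres : ∀ σ : Fin (n'+1) → Bool, AchSign φ σ → AchSign φ' (σ ∘ Fin.castSucc) := by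
      rintro σ ⟨x, hx⟩
      exact ⟨x, fun i => hx i.castSucc⟩
    -- the injection
    set f : {σ : Fin (n'+1) → Bool // AchSign φ σ} →
        {τ : Fin n' → Bool // AchSign φ' τ} ⊕ {τ : Fin n' → Bool // AchSign ψ τ} :=
      fun σ =>
        if h : AchSign ψ (σ.1 ∘ Fin.castSucc) ∧ σ.1 L = true
        then Sum.inr ⟨σ.1 ∘ Fin.castSucc, h.1⟩
        else Sum.inl ⟨σ.1 ∘ Fin.castSucc, hres σ.1 σ.2⟩ with hf
    have hext : ∀ σ₁ σ₂ : {σ : Fin (n'+1) → Bool // AchSign φ σ},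
        σ₁.1 ∘ Fin.castSucc = σ₂.1 ∘ Fin.castSucc → σ₁.1 L = σ₂.1 L → σ₁ = σ₂ := by
      intro σ₁ σ₂ hrest hlast
      apply Subtype.ext
      funext j
      rcases Fin.eq_castSucc_or_eq_last j with ⟨i, rfl⟩ | rfl
      · exact congrFun hrest i
      · exact hlast
    -- if both extensions of τ are achievable, τ is achievable on K
    have hboth : ∀ σ₁ σ₂ : {σ : Fin (n'+1) → Bool // AchSign φ σ},
        σ₁.1 ∘ Fin.castSucc = σ₂.1 ∘ Fin.castSucc → σ₁.1 L = true → σ₂.1 L = false →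
        AchSign ψ (σ₁.1 ∘ Fin.castSucc) := by
      intro s₁ s₂ hrest hl₁ hl₂
      obtain ⟨x₁, hx₁⟩ := s₁.2
      obtain ⟨x₂, hx₂⟩ := s₂.2
      have hp : 0 < φ L x₁ := (hx₁ L).2.mp hl₁
      have hq : φ L x₂ < 0 := by
        rcases lt_or_gt_of_ne (hx₂ L).1 with h | h
        · exact h
        · exact absurd ((hx₂ L).2.mpr h) (by rw [hl₂]; simp)
      obtain ⟨y, hy0, hy⟩ := cross_lemma (φ L) φ' (s₁.1 ∘ Fin.castSucc) x₁ x₂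
        (fun i => hx₁ i.castSucc)
        (fun i => by
          have hcf : s₁.1 (Fin.castSucc i) = s₂.1 (Fin.castSucc i) := congrFun hrest i
          refine ⟨(hx₂ i.castSucc).1, ?_⟩
          rw [Function.comp_apply, hcf]
          exact (hx₂ i.castSucc).2)
        hp hq
      exact ⟨⟨y, by simpa [hK, LinearMap.mem_ker] using hy0⟩, fun i => by
        simpa [hψ, LinearMap.domRestrict_apply] using hy i⟩
    have hinj : Function.Injective f := by
      rintro σ₁ σ₂ hfeq
      by_cases h1 : AchSign ψ (σ₁.1 ∘ Fin.castSucc) ∧ σ₁.1 L = true <;>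
        by_cases h2 : AchSign ψ (σ₂.1 ∘ Fin.castSucc) ∧ σ₂.1 L = true
      · rw [hf] at hfeq
        simp only [dif_pos h1, dif_pos h2] at hfeq
        have := Sum.inr.inj hfeq
        have hτ : σ₁.1 ∘ Fin.castSucc = σ₂.1 ∘ Fin.castSucc := congrArg Subtype.val this
        exact hext σ₁ σ₂ hτ (h1.2.trans h2.2.symm)
      · rw [hf] at hfeq; simp only [dif_pos h1, dif_neg h2] at hfeq
        cases hfeq
      · rw [hf] at hfeq; simp only [dif_neg h1, dif_pos h2] at hfeq
        cases hfeq
      · rw [hf] at hfeq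
        simp only [dif_neg h1, dif_neg h2] at hfeq
        have hτ : σ₁.1 ∘ Fin.castSucc = σ₂.1 ∘ Fin.castSucc :=
          congrArg Subtype.val (Sum.inl.inj hfeq)
        rcases Bool.eq_or_eq_not (σ₁.1 L) (σ₂.1 L) with hl | hl
        · exact hext σ₁ σ₂ hτ hl
        · exfalso
          cases hb : σ₂.1 L with
          | true =>
              rw [hb] at hl; simp at hl
              have := hboth σ₂ σ₁ hτ.symm hb hl
              exact h2 ⟨this, hb⟩
          | false =>
              rw [hb] at hl; simp at hl
              have := hboth σ₁ σ₂ hτ hl hb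
              exact h1 ⟨this, hl⟩
    -- cardinality arithmetic
    have hcardle : Nat.card {σ : Fin (n'+1) → Bool // AchSign φ σ}
        ≤ Nat.card {τ : Fin n' → Bool // AchSign φ' τ}
          + Nat.card {τ : Fin n' → Bool // AchSign ψ τ} := by
      rw [← Nat.card_sum]
      exact Nat.card_le_card_of_injective f hinj
    have hA' := ih m V hrank hmn' (by omega) φ' hgp'
    have hC := ih (m - 1) K hrankK (by omega) (by omega) ψ hgpψ
    have harith : ∑ j ∈ range m, (n' + 1 - 1).choose j
        = (∑ j ∈ range (m - 1), (n' - 1).choose j) + ∑ j ∈ range m, (n' - 1).choose j := by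
      obtain ⟨k, rfl⟩ : ∃ k, n' = k + 1 := ⟨n' - 1, by omega⟩
      obtain ⟨mm, rfl⟩ : ∃ mm, m = mm + 1 := ⟨m - 1, by omega⟩
      simpa using pascal_sum k mm
    omega

/-- Dot product with a fixed vector, as a linear functional. -/
def dotL {m : ℕ} (a : Fin m → ℝ) : (Fin m → ℝ) →ₗ[ℝ] ℝ where
  toFun x := a ⬝ᵥ x
  map_add' x y := dotProduct_add a x y
  map_smul' c x := by simp [dotProduct_smul, smul_eq_mul]

/-- An arrangement of `n` hyperplanes through the origin in `ℝ^m` (`n ≥ m ≥ 1`,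
hyperplanes in general position: every `m` of the normal vectors are linearly
independent) partitions `ℝ^m` minus their union into at most
`2 · ∑_{j=0}^{m-1} C(n-1, j)` regions. -/
theorem central_arrangement_region_bound (m n : ℕ) (hm : 1 ≤ m) (hnm : m ≤ n)
    (a : Fin n → (Fin m → ℝ)) (ha : ∀ i, a i ≠ 0)
    (hgen : ∀ s : Finset (Fin n), s.card = m →
      LinearIndependent ℝ (fun i : s => a i)) :
    Nat.card (ConnectedComponents {x : Fin m → ℝ | ∀ i, a i ⬝ᵥ x ≠ 0}) ≤
      2 * ∑ j ∈ Finset.range m, (n - 1).choose j := by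
  classical
  set S : Set (Fin m → ℝ) := {x : Fin m → ℝ | ∀ i, a i ⬝ᵥ x ≠ 0} with hS
  set φ : Fin n → ((Fin m → ℝ) →ₗ[ℝ] ℝ) := fun i => dotL (a i) with hφ
  -- general position, flattened
  have hGP : GPos φ m := by
    intro t c hcard hsum i hi
    have hvec : ∑ i ∈ t, c i • a i = 0 := by
      funext j
      have hj := congrArg (fun f : (Fin m → ℝ) →ₗ[ℝ] ℝ => f (Pi.single j 1)) hsum
      simpa [hφ, dotL, LinearMap.sum_apply, LinearMap.smul_apply, smul_eq_mul,
        dotProduct_single, Finset.sum_apply] using hj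
    obtain ⟨s, hts, -, hscard⟩ := Finset.exists_subsuperset_card_eq
      (Finset.subset_univ t) hcard (by simpa using hnm)
    have hLI := hgen s hscard
    rw [Fintype.linearIndependent_iff] at hLI
    have hsum2 : ∑ i : s, (if (i : Fin n) ∈ t then c i else 0) • a i = 0 := by
      rw [Finset.sum_coe_sort s (fun i => (if i ∈ t then c i else 0) • a i)]
      simp only [ite_smul, zero_smul]
      rw [Finset.sum_ite_mem, Finset.inter_eq_right.mpr hts]
      exact hvec
    have := hLI _ hsum2 ⟨i, hts hi⟩
    simpa [hi] using this
  -- same sign pattern implies same connected component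
  have hsame : ∀ (σ : Fin n → Bool) (x y : S),
      (∀ i, σ i = true ↔ 0 < a i ⬝ᵥ (x : Fin m → ℝ)) →
      (∀ i, σ i = true ↔ 0 < a i ⬝ᵥ (y : Fin m → ℝ)) →
      (ConnectedComponents.mk x = ConnectedComponents.mk y) := by
    intro σ x y hx hy
    set T : Set (Fin m → ℝ) :=
      ⋂ i, (if σ i = true then {w | 0 < a i ⬝ᵥ w} else {w | a i ⬝ᵥ w < 0}) with hT
    have hlin : ∀ i, IsLinearMap ℝ (fun w : Fin m → ℝ => a i ⬝ᵥ w) := fun i =>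
      ⟨fun u v => dotProduct_add (a i) u v, fun c u => by simp [dotProduct_smul, smul_eq_mul]⟩
    have hconv : Convex ℝ T := by
      apply convex_iInter
      intro i
      by_cases h : σ i = true
      · rw [if_pos h]; exact convex_halfSpace_gt (hlin i) 0
      · rw [if_neg h]; exact convex_halfSpace_lt (hlin i) 0
    have hTS : T ⊆ S := by
      intro w hw i
      have := Set.mem_iInter.mp hw i
      by_cases h : σ i = true
      · rw [if_pos h] at this; exact ne_of_gt this
      · rw [if_neg h] at this; exact ne_of_lt this
    have hmem : ∀ z : S, (∀ i, σ i = true ↔ 0 < a i ⬝ᵥ (z : Fin m → ℝ)) →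
        (z : Fin m → ℝ) ∈ T := by
      intro z hz
      apply Set.mem_iInter.mpr
      intro i
      by_cases h : σ i = true
      · rw [if_pos h]; exact (hz i).mp h
      · rw [if_neg h]
        have h1 : ¬(0 < a i ⬝ᵥ (z : Fin m → ℝ)) := fun hlt => h ((hz i).mpr hlt)
        exact (not_lt.mp h1).lt_of_ne (z.2 i)
    have hpre : IsPreconnected T := hconv.isPreconnected
    have hpre' : IsPreconnected (Subtype.val ⁻¹' T : Set S) := by
      rw [← Topology.IsInducing.subtypeVal.isPreconnected_image]
      rwa [Subtype.image_preimage_coe, Set.inter_eq_right.mpr hTS]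
    have hyc : y ∈ connectedComponent x :=
      hpre'.subset_connectedComponent (hmem x hx) (hmem y hy)
    exact (ConnectedComponents.coe_eq_coe'.mpr hyc).symm
  -- surjection from achievable sign vectors onto components
  have hfin : Finite {σ : Fin n → Bool // AchSign φ σ} := Subtype.finite
  have hsurj : Function.Surjective
      (fun σ : {σ : Fin n → Bool // AchSign φ σ} =>
        (ConnectedComponents.mk
          (⟨σ.2.choose, fun i => (σ.2.choose_spec i).1⟩ : S))) := by
    intro cc
    obtain ⟨z, rfl⟩ := ConnectedComponents.surjective_coe cc
    set σz : Fin n → Bool := fun i => decide (0 < a i ⬝ᵥ (z : Fin m → ℝ)) with hσz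
    have hach : AchSign φ σz := ⟨(z : Fin m → ℝ), fun i => ⟨z.2 i, by
      simp only [hσz, decide_eq_true_eq]; exact Iff.rfl⟩⟩
    refine ⟨⟨σz, hach⟩, ?_⟩
    apply hsame σz
    · exact fun i => (hach.choose_spec i).2
    · intro i; simp [hσz]
  calc Nat.card (ConnectedComponents S)
      ≤ Nat.card {σ : Fin n → Bool // AchSign φ σ} :=
        Nat.card_le_card_of_surjective _ hsurj
    _ ≤ 2 * ∑ j ∈ Finset.range m, (n - 1).choose j := by
        apply aux_count n m (Fin m → ℝ)
          (by simp [Module.finrank_fintype_fun_eq_card]) hnm (le_trans hm hnm) φ hGP
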